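/- Let C and D be finitely generated free ℤ-graded, ℤ-filtered chain complexes over 𝔽₂[U] that are filtered chain homotopy equivalent, and for t ∈ [0,1] let Υ_C(t) be the maximal gr_t-grading of a homogeneous non-torsion class in H(C^t). Then Υ_C(t) = Υ_D(t) for all t ∈ [0,1]. -/

import Mathlib

open scoped NNReal
open Polynomial

abbrev F2 := ZMod 2
abbrev PU := Polynomial F2
abbrev LongR := HahnSeries ℝ≥0 F2

noncomputable example : CommRing LongR := inferInstance

noncomputable def v (α : ℝ≥0) : LongR := HahnSeries.single α 1

/-- A finitely generated, free, `ℤ`-graded `ℤ`-filtered chain complex over `𝔽₂[U]`,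
presented by a basis with Maslov grading `M`, Alexander filtration level `A`, and
structure coefficients `c`, so that `∂ x = ∑ y, c x y • U ^ ((M y - M x + 1)/2) • y`. -/
structure BasedComplex where
  ι : Type
  [fin : Fintype ι]
  [dec : DecidableEq ι]
  M : ι → ℤ
  A : ι → ℤ
  c : ι → ι → F2
  hM : ∀ x y, c x y ≠ 0 → ∃ k : ℕ, M y = M x - 1 + 2 * k
  hA : ∀ x y, c x y ≠ 0 → 2 * (A y - A x) ≤ M y - M x + 1
  d2 : ∀ x z, (∑ y, c x y * c y z) = 0

attribute [instance] BasedComplex.fin BasedComplex.dec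

namespace BasedComplex

variable (C : BasedComplex)

/-- The underlying free `𝔽₂[U]`-module. -/
abbrev PMod := C.ι → PU

/-- The differential of the complex over `𝔽₂[U]`. -/
noncomputable def pDiff : C.PMod →ₗ[PU] C.PMod where
  toFun f := fun y => ∑ x, f x * (Polynomial.C (C.c x y) * Polynomial.X ^ ((C.M y - C.M x + 1) / 2).toNat)
  map_add' f g := by
    funext y
    simp [add_mul, Finset.sum_add_distrib]
  map_smul' r f := by
    funext y
    simp [Finset.mul_sum, mul_assoc]

/-- Homogeneous of Maslov degree `m` (the basis element `U^k x` has degree `M x - 2k`). -/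
def PHomog (m : ℤ) (f : C.PMod) : Prop :=
  ∀ x k, (f x).coeff k ≠ 0 → C.M x - 2 * (k : ℤ) = m

/-- Lies in Alexander filtration level `≤ a` (the element `U^k x` has level `A x - k`). -/
def PInFilt (a : ℤ) (f : C.PMod) : Prop :=
  ∀ x k, (f x).coeff k ≠ 0 → C.A x - (k : ℤ) ≤ a

end BasedComplex

/-- A graded, filtered chain map over `𝔽₂[U]`. -/
structure PChainMap (C D : BasedComplex) where
  toFun : C.PMod →ₗ[PU] D.PMod
  comm : ∀ f, toFun (C.pDiff f) = D.pDiff (toFun f)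
  graded : ∀ m f, C.PHomog m f → D.PHomog m (toFun f)
  filtered : ∀ a f, C.PInFilt a f → D.PInFilt a (toFun f)

/-- Filtered chain homotopy between two maps (char 2, so signs are irrelevant). -/
def PHomotopic (C D : BasedComplex) (φ ψ : C.PMod →ₗ[PU] D.PMod) : Prop :=
  ∃ H : C.PMod →ₗ[PU] D.PMod,
    (∀ a f, C.PInFilt a f → D.PInFilt a (H f)) ∧
    (∀ m f, C.PHomog m f → D.PHomog (m + 1) (H f)) ∧
    ∀ f, D.pDiff (H f) + H (C.pDiff f) = φ f + ψ f

/-- Filtered chain homotopy equivalence of complexes over `𝔽₂[U]`. -/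
def FilteredHtpyEquiv (C D : BasedComplex) : Prop :=
  ∃ (φ : PChainMap C D) (ψ : PChainMap D C),
    PHomotopic C C (ψ.toFun.comp φ.toFun) LinearMap.id ∧
    PHomotopic D D (φ.toFun.comp ψ.toFun) LinearMap.id

namespace BasedComplex

variable (C : BasedComplex)

/-- `gr_t` of a basis element: `M x - t * A x`. -/
noncomputable def grt (t : ℝ) (x : C.ι) : ℝ := (C.M x : ℝ) - t * (C.A x : ℝ)

/-- Exponent of `v` in the `t`-modified differential. -/
noncomputable def texp (t : ℝ) (x y : C.ι) : ℝ≥0 := (C.grt t y - C.grt t x + 1).toNNReal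

/-- The `t`-modified differential `∂_t x = ∑ y, c x y • v ^ (gr_t y - gr_t x + 1) • y`,
on the `t`-modified complex `C^t = ⊕_x ℛ⟨x⟩`. -/
noncomputable def tDiff (t : ℝ) : (C.ι → LongR) →ₗ[LongR] (C.ι → LongR) where
  toFun f := fun y => ∑ x, f x * HahnSeries.single (C.texp t x y) (C.c x y)
  map_add' f g := by
    funext y
    simp [add_mul, Finset.sum_add_distrib]
  map_smul' r f := by
    funext y
    simp [Finset.mul_sum, mul_assoc]

/-- Homogeneous of `gr_t`-degree `d` in `C^t` (the element `v^α x` has degree `gr_t x - α`). -/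
def THomog (t d : ℝ) (f : C.ι → LongR) : Prop :=
  ∀ x α, (f x).coeff α ≠ 0 → C.grt t x - (α : ℝ) = d

noncomputable abbrev tCycles (t : ℝ) : Submodule LongR (C.ι → LongR) :=
  LinearMap.ker (C.tDiff t)

/-- Homology of the `t`-modified complex, as an `ℛ`-module. -/
noncomputable abbrev tHomology (t : ℝ) :=
  C.tCycles t ⧸ (LinearMap.range (C.tDiff t)).comap (C.tCycles t).subtype

noncomputable def tClass (t : ℝ) (f : C.ι → LongR) (hf : f ∈ C.tCycles t) :
    C.tHomology t :=
  Submodule.Quotient.mk ⟨f, hf⟩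

/-- The set of `gr_t`-gradings of homogeneous, non-torsion classes in `H(C^t)`. -/
noncomputable def UpsSet (t : ℝ) : Set ℝ :=
  {d | ∃ (f : C.ι → LongR) (hf : f ∈ C.tCycles t),
    C.THomog t d f ∧ ∀ r : LongR, r ≠ 0 → r • C.tClass t f hf ≠ 0}

end BasedComplex

/-- A graded chain map of `t`-modified complexes over `ℛ`. -/
def TChainMapProp (C D : BasedComplex) (t : ℝ)
    (φ : (C.ι → LongR) →ₗ[LongR] (D.ι → LongR)) : Prop :=
  (∀ f, φ (C.tDiff t f) = D.tDiff t (φ f)) ∧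
  ∀ d f, C.THomog t d f → D.THomog t d (φ f)

/-- Graded chain homotopy equivalence of `t`-modified complexes over `ℛ`. -/
def THtpyEquiv (C D : BasedComplex) (t : ℝ) : Prop :=
  ∃ (φ : (C.ι → LongR) →ₗ[LongR] (D.ι → LongR))
    (ψ : (D.ι → LongR) →ₗ[LongR] (C.ι → LongR))
    (H₁ : (C.ι → LongR) →ₗ[LongR] (C.ι → LongR))
    (H₂ : (D.ι → LongR) →ₗ[LongR] (D.ι → LongR)),
    TChainMapProp C D t φ ∧ TChainMapProp D C t ψ ∧
    (∀ d f, C.THomog t d f → C.THomog t (d + 1) (H₁ f)) ∧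
    (∀ f, C.tDiff t (H₁ f) + H₁ (C.tDiff t f) = ψ (φ f) + f) ∧
    (∀ d f, D.THomog t d f → D.THomog t (d + 1) (H₂ f)) ∧
    (∀ f, D.tDiff t (H₂ f) + H₂ (D.tDiff t f) = φ (ψ f) + f)

section UpsilonProof

example (a : ZMod 2) : a + a = 0 := CharTwo.add_self_eq_zero a

lemma longR_add_self (a : LongR) : a + a = 0 := by
  ext α; simp [CharTwo.add_self_eq_zero]

lemma hsingle_add (e : ℝ≥0) (a b : F2) :
    HahnSeries.single e (a + b) = HahnSeries.single e a + HahnSeries.single e b := by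
  ext β; simp only [HahnSeries.coeff_single, HahnSeries.coeff_add]; split_ifs <;> simp

/-- `polyToHahn e p = ∑ k in supp p, v^(e k) * (coeff k)`. -/
noncomputable def polyToHahn (e : ℕ → ℝ≥0) (p : PU) : LongR :=
  ∑ k ∈ p.support, HahnSeries.single (e k) (p.coeff k)

lemma polyToHahn_eq_sum_range (e : ℕ → ℝ≥0) (p : PU) {N : ℕ} (hN : p.natDegree < N) :
    polyToHahn e p = ∑ k ∈ Finset.range N, HahnSeries.single (e k) (p.coeff k) := by
  refine Finset.sum_subset (fun k hk => ?_) (fun k _ hk => ?_)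
  · exact Finset.mem_range.2 (lt_of_le_of_lt (Polynomial.le_natDegree_of_mem_supp k hk) hN)
  · rw [Polynomial.notMem_support_iff.1 hk]; simp

lemma polyToHahn_add (e : ℕ → ℝ≥0) (p q : PU) :
    polyToHahn e (p + q) = polyToHahn e p + polyToHahn e q := by
  obtain ⟨N, h1, h2, h3⟩ : ∃ N, p.natDegree < N ∧ q.natDegree < N ∧ (p+q).natDegree < N := by
    refine ⟨max p.natDegree q.natDegree + 1, by omega, by omega, ?_⟩
    have := Polynomial.natDegree_add_le p q; omega
  rw [polyToHahn_eq_sum_range e p h1, polyToHahn_eq_sum_range e q h2,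
    polyToHahn_eq_sum_range e _ h3, ← Finset.sum_add_distrib]
  exact Finset.sum_congr rfl fun k _ => by rw [Polynomial.coeff_add, hsingle_add]

lemma polyToHahn_zero (e : ℕ → ℝ≥0) : polyToHahn e 0 = 0 := by simp [polyToHahn]

lemma polyToHahn_coeff (e : ℕ → ℝ≥0) (p : PU) {β : ℝ≥0}
    (h : (polyToHahn e p).coeff β ≠ 0) : ∃ k, p.coeff k ≠ 0 ∧ β = e k := by
  rw [polyToHahn] at h
  have : ((∑ k ∈ p.support, HahnSeries.single (e k) (p.coeff k)).coeff β) =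
      ∑ k ∈ p.support, (HahnSeries.single (e k) (p.coeff k)).coeff β :=
    map_sum (HahnSeries.coeff.addMonoidHom β) _ _
  rw [this] at h
  obtain ⟨k, hk, hne⟩ := Finset.exists_ne_zero_of_sum_ne_zero h
  rw [HahnSeries.coeff_single] at hne
  by_cases hb : β = e k
  · exact ⟨k, Polynomial.mem_support_iff.1 hk, hb⟩
  · simp [hb] at hne

noncomputable def singleHom (e : ℝ≥0) : F2 →+ LongR :=
  { toFun := HahnSeries.single e, map_zero' := by simp, map_add' := hsingle_add e }

lemma polyToHahn_mul (e₁ e₂ e₃ : ℕ → ℝ≥0) (p q : PU)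
    (h : ∀ k ∈ p.support, ∀ j ∈ q.support, e₁ k + e₂ j = e₃ (k + j)) :
    polyToHahn e₁ p * polyToHahn e₂ q = polyToHahn e₃ (p * q) := by
  classical
  set g : ℕ × ℕ → LongR := fun kj =>
    HahnSeries.single (e₃ (kj.1 + kj.2)) (p.coeff kj.1 * q.coeff kj.2) with hg
  have hLHS : polyToHahn e₁ p * polyToHahn e₂ q = ∑ kj ∈ p.support ×ˢ q.support, g kj := by
    rw [polyToHahn, polyToHahn, Finset.sum_mul_sum, ← Finset.sum_product']
    refine Finset.sum_congr rfl fun kj hkj => ?_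
    obtain ⟨hk, hj⟩ := Finset.mem_product.1 hkj
    rw [HahnSeries.single_mul_single, h _ hk _ hj]
  set N := p.natDegree + q.natDegree + 1 with hN
  have hdeg : (p * q).natDegree < N := lt_of_le_of_lt (Polynomial.natDegree_mul_le) (by omega)
  set T : Finset (ℕ × ℕ) := (Finset.range N).biUnion Finset.HasAntidiagonal.antidiagonal with hT
  have hRHS : polyToHahn e₃ (p * q) = ∑ kj ∈ T, g kj := by
    rw [polyToHahn_eq_sum_range e₃ _ hdeg, hT,
      Finset.sum_biUnion (fun m _ m' _ hmm => Finset.disjoint_left.2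
        fun kj h1 h2 => hmm (by rw [← Finset.HasAntidiagonal.mem_antidiagonal.1 h1, Finset.HasAntidiagonal.mem_antidiagonal.1 h2]))]
    refine Finset.sum_congr rfl fun m _ => ?_
    rw [Polynomial.coeff_mul]
    have hs : ∀ s : F2, HahnSeries.single (e₃ m) s = singleHom (e₃ m) s := fun _ => rfl
    rw [hs, map_sum]
    refine Finset.sum_congr rfl fun kj hkj => ?_
    show singleHom (e₃ m) _ = HahnSeries.single (e₃ (kj.1 + kj.2)) _
    rw [← Finset.HasAntidiagonal.mem_antidiagonal.1 hkj]
    rfl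
  rw [hLHS, hRHS]
  refine Finset.sum_subset (fun kj hkj => ?_) (fun kj _ hkj => ?_)
  · obtain ⟨hk, hj⟩ := Finset.mem_product.1 hkj
    refine Finset.mem_biUnion.2 ⟨kj.1 + kj.2, Finset.mem_range.2 ?_, Finset.HasAntidiagonal.mem_antidiagonal.2 rfl⟩
    have := Polynomial.le_natDegree_of_mem_supp _ hk
    have := Polynomial.le_natDegree_of_mem_supp _ hj
    omega
  · by_cases h1 : kj.1 ∈ p.support
    · by_cases h2 : kj.2 ∈ q.support
      · exact absurd (Finset.mem_product.2 ⟨h1, h2⟩) hkj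
      · simp [hg, Polynomial.notMem_support_iff.1 h2]
    · simp [hg, Polynomial.notMem_support_iff.1 h1]

/-! ### Matrix machinery -/

noncomputable def polyToHahnHom (e : ℕ → ℝ≥0) : PU →+ LongR :=
  { toFun := polyToHahn e, map_zero' := polyToHahn_zero e, map_add' := polyToHahn_add e }

noncomputable def mkMap {ι κ : Type} [Fintype ι] (T : ι → κ → LongR) :
    (ι → LongR) →ₗ[LongR] (κ → LongR) where
  toFun f := fun y => ∑ x, f x * T x y
  map_add' f g := by
    funext y
    simp [add_mul, Finset.sum_add_distrib]
  map_smul' r f := by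
    funext y
    simp [Finset.mul_sum, mul_assoc]

lemma mkMap_apply {ι κ : Type} [Fintype ι] (T : ι → κ → LongR) (f : ι → LongR) (y : κ) :
    mkMap T f y = ∑ x, f x * T x y := rfl

lemma mkMap_congr {ι κ : Type} [Fintype ι] {T T' : ι → κ → LongR} (h : ∀ x y, T x y = T' x y)
    (f : ι → LongR) : mkMap T f = mkMap T' f := by
  have : T = T' := funext fun x => funext fun y => h x y
  rw [this]

lemma tDiff_eq_mkMap (C : BasedComplex) (t : ℝ) :
    C.tDiff t = mkMap (fun x y => HahnSeries.single (C.texp t x y) (C.c x y)) := rfl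

lemma mkMap_comp {ι κ μ : Type} [Fintype ι] [Fintype κ]
    (T₁ : ι → κ → LongR) (T₂ : κ → μ → LongR) (f : ι → LongR) :
    mkMap T₂ (mkMap T₁ f) = mkMap (fun x z => ∑ y, T₁ x y * T₂ y z) f := by
  funext z
  simp only [mkMap_apply, Finset.sum_mul, Finset.mul_sum, mul_assoc]
  exact Finset.sum_comm

lemma mkMap_add {ι κ : Type} [Fintype ι] (T T' : ι → κ → LongR) (f : ι → LongR) :
    mkMap (fun x y => T x y + T' x y) f = mkMap T f + mkMap T' f := by
  funext y
  simp [mkMap_apply, mul_add, Finset.sum_add_distrib]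

lemma mkMap_id {ι : Type} [Fintype ι] [DecidableEq ι] (f : ι → LongR) :
    mkMap (fun x y => if x = y then 1 else 0) f = f := by
  funext y
  simp [mkMap_apply, Finset.sum_ite_eq', mul_ite]

noncomputable def matOf {C D : BasedComplex} (ℓ : C.PMod →ₗ[PU] D.PMod) :
    C.ι → D.ι → PU :=
  fun x y => ℓ (fun j => if x = j then 1 else 0) y

lemma apply_matOf {C D : BasedComplex} (ℓ : C.PMod →ₗ[PU] D.PMod) (f : C.PMod) (y : D.ι) :
    ℓ f y = ∑ x, f x * matOf ℓ x y := by
  rw [LinearMap.pi_apply_eq_sum_univ ℓ f]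
  simp [matOf, Finset.sum_apply]

lemma matOf_comp {C D E : BasedComplex} (ℓ₁ : C.PMod →ₗ[PU] D.PMod)
    (ℓ₂ : D.PMod →ₗ[PU] E.PMod) (x : C.ι) (z : E.ι) :
    matOf (ℓ₂.comp ℓ₁) x z = ∑ y, matOf ℓ₁ x y * matOf ℓ₂ y z := by
  rw [matOf, LinearMap.comp_apply, apply_matOf]
  rfl

lemma matOf_add {C D : BasedComplex} (ℓ ℓ' : C.PMod →ₗ[PU] D.PMod) (x : C.ι) (y : D.ι) :
    matOf (ℓ + ℓ') x y = matOf ℓ x y + matOf ℓ' x y := rfl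

lemma matOf_id {C : BasedComplex} (x y : C.ι) :
    matOf (LinearMap.id : C.PMod →ₗ[PU] C.PMod) x y = if x = y then 1 else 0 := rfl

/-- The delta basis vector is homogeneous and filtered. -/
lemma delta_PHomog (C : BasedComplex) (x : C.ι) :
    C.PHomog (C.M x) (fun j => if x = j then 1 else 0) := by
  intro x' k h
  by_cases hx : x = x'
  · subst hx
    simp only [if_pos rfl, Polynomial.coeff_one] at h
    have : k = 0 := by by_contra hk; simp [Polynomial.coeff_one, hk] at h
    subst this; simp
  · simp [hx] at h

lemma delta_PInFilt (C : BasedComplex) (x : C.ι) :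
    C.PInFilt (C.A x) (fun j => if x = j then 1 else 0) := by
  intro x' k h
  by_cases hx : x = x'
  · subst hx
    simp only [if_pos rfl, Polynomial.coeff_one] at h
    have : k = 0 := by by_contra hk; simp [Polynomial.coeff_one, hk] at h
    subst this; simp
  · simp [hx] at h

def MatFilt (C D : BasedComplex) (P : C.ι → D.ι → PU) : Prop :=
  ∀ x y k, (P x y).coeff k ≠ 0 → (D.A y : ℤ) - k ≤ C.A x

def MatGr (C D : BasedComplex) (s : ℤ) (P : C.ι → D.ι → PU) : Prop :=
  ∀ x y k, (P x y).coeff k ≠ 0 → (D.M y : ℤ) - 2 * k = C.M x + s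

lemma matFilt_of_filtered {C D : BasedComplex} {ℓ : C.PMod →ₗ[PU] D.PMod}
    (h : ∀ a f, C.PInFilt a f → D.PInFilt a (ℓ f)) : MatFilt C D (matOf ℓ) :=
  fun x y k hk => by
    have := h (C.A x) _ (delta_PInFilt C x) y k hk
    omega

lemma matGr_of_graded {C D : BasedComplex} {ℓ : C.PMod →ₗ[PU] D.PMod} (s : ℤ)
    (h : ∀ m f, C.PHomog m f → D.PHomog (m + s) (ℓ f)) : MatGr C D s (matOf ℓ) :=
  fun x y k hk => by
    have := h (C.M x) _ (delta_PHomog C x) y k hk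
    omega

/-! ### The `t`-modification of matrices -/

noncomputable def hexp (C D : BasedComplex) (t : ℝ) (x : C.ι) (y : D.ι) (k : ℕ) : ℝ≥0 :=
  (2 * (k : ℝ) - t * ((D.A y : ℝ) - (C.A x : ℝ))).toNNReal

lemma exp_nonneg {t : ℝ} (h0 : 0 ≤ t) (h1 : t ≤ 1) {k : ℕ} {δ : ℤ} (hδ : δ ≤ (k : ℤ)) :
    0 ≤ 2 * (k : ℝ) - t * (δ : ℝ) := by
  have hδ' : (δ : ℝ) ≤ (k : ℝ) := by exact_mod_cast hδ
  rcases le_or_gt (δ : ℝ) 0 with h | h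
  · nlinarith [mul_nonneg h0 (neg_nonneg.2 h)]
  · nlinarith

noncomputable def hmat (C D : BasedComplex) (t : ℝ) (P : C.ι → D.ι → PU) :
    C.ι → D.ι → LongR :=
  fun x y => polyToHahn (hexp C D t x y) (P x y)

lemma hmat_add (C D : BasedComplex) (t : ℝ) (P Q : C.ι → D.ι → PU) (x : C.ι) (y : D.ι) :
    hmat C D t (fun x y => P x y + Q x y) x y = hmat C D t P x y + hmat C D t Q x y :=
  polyToHahn_add _ _ _

lemma hmat_mul {C D E : BasedComplex} {t : ℝ} (h0 : 0 ≤ t) (h1 : t ≤ 1)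
    (P : C.ι → D.ι → PU) (Q : D.ι → E.ι → PU)
    (hP : MatFilt C D P) (hQ : MatFilt D E Q) (x : C.ι) (z : E.ι) :
    hmat C E t (fun x z => ∑ y, P x y * Q y z) x z
      = ∑ y, hmat C D t P x y * hmat D E t Q y z := by
  rw [hmat]
  have : ∀ e, polyToHahn e (∑ y, P x y * Q y z) = ∑ y, polyToHahn e (P x y * Q y z) :=
    fun e => map_sum (polyToHahnHom e) _ _
  rw [this]
  refine Finset.sum_congr rfl fun y _ => ?_
  rw [hmat, hmat]
  refine (polyToHahn_mul _ _ _ _ _ fun k hk j hj => ?_).symm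
  have hk' := hP x y k (Polynomial.mem_support_iff.1 hk)
  have hj' := hQ y z j (Polynomial.mem_support_iff.1 hj)
  have e1 : (0:ℝ) ≤ 2 * (k : ℝ) - t * ((D.A y : ℝ) - (C.A x : ℝ)) := by
    have := exp_nonneg h0 h1 (k := k) (δ := D.A y - C.A x) (by omega)
    push_cast at this ⊢; linarith
  have e2 : (0:ℝ) ≤ 2 * (j : ℝ) - t * ((E.A z : ℝ) - (D.A y : ℝ)) := by
    have := exp_nonneg h0 h1 (k := j) (δ := E.A z - D.A y) (by omega)
    push_cast at this ⊢; linarith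
  rw [hexp, hexp, hexp, ← Real.toNNReal_add e1 e2]
  congr 1
  push_cast
  ring

lemma hmat_pDiff (C : BasedComplex) (t : ℝ) (x y : C.ι) :
    hmat C C t (matOf C.pDiff) x y = HahnSeries.single (C.texp t x y) (C.c x y) := by
  have hmof : matOf C.pDiff x y
      = Polynomial.C (C.c x y) * Polynomial.X ^ ((C.M y - C.M x + 1) / 2).toNat := by
    rw [matOf]
    show ∑ x', (if x = x' then 1 else 0 : PU) * _ = _
    simp [Finset.sum_ite_eq]
  by_cases hc : C.c x y = 0
  · rw [hmat, hmof, hc]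
    simp [polyToHahn_zero]
  · obtain ⟨k₀, hk₀⟩ := C.hM x y hc
    have hdiv : ((C.M y - C.M x + 1) / 2).toNat = k₀ := by omega
    rw [hmat, hmof, hdiv]
    have hmon : Polynomial.C (C.c x y) * Polynomial.X ^ k₀
        = Polynomial.monomial k₀ (C.c x y) := by
      rw [Polynomial.C_mul_X_pow_eq_monomial]
    rw [hmon, polyToHahn]
    rw [Polynomial.support_monomial k₀ hc]
    rw [Finset.sum_singleton, Polynomial.coeff_monomial, if_pos rfl]
    congr 1
    rw [hexp, BasedComplex.texp, BasedComplex.grt, BasedComplex.grt]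
    congr 1
    have : (C.M y : ℝ) - C.M x + 1 = 2 * (k₀ : ℝ) := by
      have : (C.M y : ℤ) = C.M x - 1 + 2 * k₀ := hk₀
      push_cast [this]; ring
    congr 1
    linear_combination -this

lemma hmat_id (C : BasedComplex) (t : ℝ) (x y : C.ι) :
    hmat C C t (matOf (LinearMap.id : C.PMod →ₗ[PU] C.PMod)) x y
      = if x = y then 1 else 0 := by
  rw [hmat, matOf_id]
  by_cases hxy : x = y
  · subst hxy
    rw [if_pos rfl, if_pos rfl]
    rw [show (1 : PU) = Polynomial.monomial 0 1 from (Polynomial.monomial_zero_one).symm]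
    rw [polyToHahn, Polynomial.support_monomial 0 one_ne_zero, Finset.sum_singleton,
      Polynomial.coeff_monomial, if_pos rfl]
    have : hexp C C t x x 0 = 0 := by
      rw [hexp]
      simp
    rw [this]
    exact HahnSeries.single_zero_one
  · rw [if_neg hxy, if_neg hxy, polyToHahn_zero]

/-- The `t`-modification of a `𝔽₂[U]`-linear map. -/
noncomputable def tmod {C D : BasedComplex} (t : ℝ) (ℓ : C.PMod →ₗ[PU] D.PMod) :
    (C.ι → LongR) →ₗ[LongR] (D.ι → LongR) :=
  mkMap (hmat C D t (matOf ℓ))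

lemma tmod_comp {C D E : BasedComplex} {t : ℝ} (h0 : 0 ≤ t) (h1 : t ≤ 1)
    (ℓ₁ : C.PMod →ₗ[PU] D.PMod) (ℓ₂ : D.PMod →ₗ[PU] E.PMod)
    (hf₁ : MatFilt C D (matOf ℓ₁)) (hf₂ : MatFilt D E (matOf ℓ₂)) (f : C.ι → LongR) :
    tmod t (ℓ₂.comp ℓ₁) f = tmod t ℓ₂ (tmod t ℓ₁ f) := by
  rw [tmod, tmod, tmod, mkMap_comp]
  refine mkMap_congr (fun x z => ?_) f
  rw [show hmat C E t (matOf (ℓ₂.comp ℓ₁)) x z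
      = hmat C E t (fun x z => ∑ y, matOf ℓ₁ x y * matOf ℓ₂ y z) x z by
    rw [hmat, hmat, matOf_comp]]
  exact hmat_mul h0 h1 _ _ hf₁ hf₂ x z

lemma tmod_pDiff (C : BasedComplex) (t : ℝ) (f : C.ι → LongR) :
    tmod t C.pDiff f = C.tDiff t f := by
  rw [tmod, tDiff_eq_mkMap]
  exact mkMap_congr (hmat_pDiff C t) f

lemma tmod_add {C D : BasedComplex} (t : ℝ) (ℓ ℓ' : C.PMod →ₗ[PU] D.PMod) (f : C.ι → LongR) :
    tmod t (ℓ + ℓ') f = tmod t ℓ f + tmod t ℓ' f := by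
  rw [tmod, tmod, tmod, ← mkMap_add]
  refine mkMap_congr (fun x y => ?_) f
  rw [← hmat_add]
  rfl

lemma tmod_id (C : BasedComplex) (t : ℝ) (f : C.ι → LongR) :
    tmod t (LinearMap.id : C.PMod →ₗ[PU] C.PMod) f = f := by
  rw [tmod]
  rw [show hmat C C t (matOf (LinearMap.id : C.PMod →ₗ[PU] C.PMod))
      = fun x y => if x = y then 1 else 0 from funext fun x => funext fun y => hmat_id C t x y]
  exact mkMap_id f

/-- The `t`-modification of a graded filtered map is graded (with the same shift). -/
lemma tmod_graded {C D : BasedComplex} {t : ℝ} (h0 : 0 ≤ t) (h1 : t ≤ 1)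
    (ℓ : C.PMod →ₗ[PU] D.PMod) (hF : MatFilt C D (matOf ℓ)) (s : ℤ)
    (hG : MatGr C D s (matOf ℓ)) (d : ℝ) (f : C.ι → LongR) (hf : C.THomog t d f) :
    D.THomog t (d + s) (tmod t ℓ f) := by
  intro y α hcoeff
  rw [tmod, mkMap_apply] at hcoeff
  have hc2 : (∑ x, f x * hmat C D t (matOf ℓ) x y).coeff α
      = ∑ x, (f x * hmat C D t (matOf ℓ) x y).coeff α :=
    map_sum (HahnSeries.coeff.addMonoidHom α) _ _
  rw [hc2] at hcoeff
  obtain ⟨x, -, hx⟩ := Finset.exists_ne_zero_of_sum_ne_zero hcoeff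
  rw [HahnSeries.coeff_mul] at hx
  obtain ⟨⟨γ, β⟩, hmem, hne⟩ := Finset.exists_ne_zero_of_sum_ne_zero hx
  obtain ⟨-, -, hsum⟩ := Finset.mem_addAntidiagonal.1 hmem
  have hfγ : (f x).coeff γ ≠ 0 := fun h => hne (by simp [h])
  have hTβ : (hmat C D t (matOf ℓ) x y).coeff β ≠ 0 := fun h => hne (by simp [h])
  have hd : C.grt t x - (γ : ℝ) = d := hf x γ hfγ
  obtain ⟨k, hk, hβ⟩ := polyToHahn_coeff _ _ hTβ
  have hMk : (D.M y : ℤ) - 2 * k = C.M x + s := hG x y k hk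
  have hAk : (D.A y : ℤ) - k ≤ C.A x := hF x y k hk
  have hpos : (0:ℝ) ≤ 2 * (k : ℝ) - t * ((D.A y : ℝ) - (C.A x : ℝ)) := by
    have := exp_nonneg h0 h1 (k := k) (δ := D.A y - C.A x) (by omega)
    push_cast at this ⊢; linarith
  have hβval : (β : ℝ) = 2 * (k : ℝ) - t * ((D.A y : ℝ) - (C.A x : ℝ)) := by
    rw [hβ, hexp, Real.coe_toNNReal _ hpos]
  have hαval : (α : ℝ) = (γ : ℝ) + (β : ℝ) := by
    rw [← hsum]; push_cast; ring
  rw [BasedComplex.grt] at hd ⊢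
  rw [hαval, hβval]
  have hM' : (D.M y : ℝ) - 2 * k = (C.M x : ℝ) + s := by exact_mod_cast hMk
  linarith

lemma fun_add_self {ι : Type} (f : ι → LongR) : f + f = 0 :=
  funext fun x => longR_add_self (f x)

lemma matOf_pDiff (C : BasedComplex) (x y : C.ι) :
    matOf C.pDiff x y
      = Polynomial.C (C.c x y) * Polynomial.X ^ ((C.M y - C.M x + 1) / 2).toNat := by
  rw [matOf]
  show ∑ x', (if x = x' then 1 else 0 : PU) * _ = _
  simp [Finset.sum_ite_eq]

lemma matFilt_pDiff (C : BasedComplex) : MatFilt C C (matOf C.pDiff) := by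
  intro x y k hk
  rw [matOf_pDiff, Polynomial.coeff_C_mul, Polynomial.coeff_X_pow] at hk
  have hc : C.c x y ≠ 0 := fun h => hk (by simp [h])
  have hkK : k = ((C.M y - C.M x + 1) / 2).toNat := by
    by_contra hne
    simp [Ne.symm hne] at hk
    exact hne hk.1
  obtain ⟨k₀, hk₀⟩ := C.hM x y hc
  have := C.hA x y hc
  omega

/-- Transfer of the Upsilon set along a one-sided graded homotopy equivalence over `ℛ`. -/
lemma upsSet_subset (C D : BasedComplex) (t : ℝ)
    (Φ : (C.ι → LongR) →ₗ[LongR] (D.ι → LongR))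
    (Ψ : (D.ι → LongR) →ₗ[LongR] (C.ι → LongR))
    (K : (C.ι → LongR) →ₗ[LongR] (C.ι → LongR))
    (hΦc : ∀ f, Φ (C.tDiff t f) = D.tDiff t (Φ f))
    (hΨc : ∀ f, Ψ (D.tDiff t f) = C.tDiff t (Ψ f))
    (hΦg : ∀ d f, C.THomog t d f → D.THomog t d (Φ f))
    (hK : ∀ f, C.tDiff t (K f) + K (C.tDiff t f) = Ψ (Φ f) + f) :
    C.UpsSet t ⊆ D.UpsSet t := by
  rintro d ⟨f, hf, hhom, htor⟩
  have hf0 : C.tDiff t f = 0 := hf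
  have hg : Φ f ∈ D.tCycles t := by
    rw [LinearMap.mem_ker, ← hΦc, hf0, map_zero]
  refine ⟨Φ f, hg, hΦg d f hhom, ?_⟩
  intro r hr hzero
  have hmem : (r • (⟨Φ f, hg⟩ : D.tCycles t))
      ∈ (LinearMap.range (D.tDiff t)).comap (D.tCycles t).subtype := by
    rw [BasedComplex.tClass, ← Submodule.Quotient.mk_smul] at hzero
    exact (Submodule.Quotient.mk_eq_zero _).1 hzero
  rw [Submodule.mem_comap] at hmem
  obtain ⟨w, hw⟩ := hmem
  have hw' : D.tDiff t w = r • Φ f := by rw [hw]; rfl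
  refine htor r hr ?_
  rw [BasedComplex.tClass, ← Submodule.Quotient.mk_smul, Submodule.Quotient.mk_eq_zero,
    Submodule.mem_comap]
  refine ⟨Ψ w + r • K f, ?_⟩
  have hKf : C.tDiff t (K f) = Ψ (Φ f) + f := by
    have h := hK f
    rw [hf0, map_zero, add_zero] at h
    exact h
  show C.tDiff t (Ψ w + r • K f) = r • f
  rw [map_add, map_smul, ← hΨc, hw', hKf, map_smul, smul_add, ← add_assoc,
    ← smul_add, fun_add_self, smul_zero, zero_add]


end UpsilonProof

/-- If `C` and `D` are finitely generated free `ℤ`-graded, `ℤ`-filtered chain complexes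
over `𝔽₂[U]` which are filtered chain homotopy equivalent, then for `t ∈ [0,1]` the
Upsilon invariants agree: `Υ_C(t) = Υ_D(t)`, where `Υ_C(t)` is the maximal `gr_t`-grading
of a homogeneous non-torsion class in `H(C^t)`. -/
theorem upsilon_eq_of_filteredHtpyEquiv (C D : BasedComplex)
    (h : FilteredHtpyEquiv C D) :
    ∀ t ∈ Set.Icc (0 : ℝ) 1, sSup (C.UpsSet t) = sSup (D.UpsSet t) := by
  obtain ⟨φ, ψ, ⟨H₁, hH₁filt, -, hH₁⟩, ⟨H₂, hH₂filt, -, hH₂⟩⟩ := h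
  intro t ht
  obtain ⟨h0, h1⟩ := ht
  have mfφ : MatFilt C D (matOf φ.toFun) := matFilt_of_filtered φ.filtered
  have mfψ : MatFilt D C (matOf ψ.toFun) := matFilt_of_filtered ψ.filtered
  have mfH₁ : MatFilt C C (matOf H₁) := matFilt_of_filtered hH₁filt
  have mfH₂ : MatFilt D D (matOf H₂) := matFilt_of_filtered hH₂filt
  set Φ := tmod (C := C) (D := D) t φ.toFun with hΦdef
  set Ψ := tmod (C := D) (D := C) t ψ.toFun with hΨdef
  set K₁ := tmod (C := C) (D := C) t H₁ with hK₁def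
  set K₂ := tmod (C := D) (D := D) t H₂ with hK₂def
  -- chain map property of Φ
  have hφcomm : φ.toFun.comp C.pDiff = D.pDiff.comp φ.toFun :=
    LinearMap.ext fun f => φ.comm f
  have hψcomm : ψ.toFun.comp D.pDiff = C.pDiff.comp ψ.toFun :=
    LinearMap.ext fun f => ψ.comm f
  have hΦc : ∀ f, Φ (C.tDiff t f) = D.tDiff t (Φ f) := by
    intro f
    rw [hΦdef, ← tmod_pDiff C t f, ← tmod_comp h0 h1 C.pDiff φ.toFun (matFilt_pDiff C) mfφ f,
      hφcomm, tmod_comp h0 h1 φ.toFun D.pDiff mfφ (matFilt_pDiff D) f, tmod_pDiff]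
  have hΨc : ∀ f, Ψ (D.tDiff t f) = C.tDiff t (Ψ f) := by
    intro f
    rw [hΨdef, ← tmod_pDiff D t f, ← tmod_comp h0 h1 D.pDiff ψ.toFun (matFilt_pDiff D) mfψ f,
      hψcomm, tmod_comp h0 h1 ψ.toFun C.pDiff mfψ (matFilt_pDiff C) f, tmod_pDiff]
  -- gradedness
  have hΦg : ∀ d f, C.THomog t d f → D.THomog t d (Φ f) := by
    intro d f hf
    have hGr : MatGr C D 0 (matOf φ.toFun) :=
      matGr_of_graded 0 (fun m f hfm => by simpa using φ.graded m f hfm)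
    have := tmod_graded h0 h1 φ.toFun mfφ 0 hGr d f hf
    simpa using this
  have hΨg : ∀ d f, D.THomog t d f → C.THomog t d (Ψ f) := by
    intro d f hf
    have hGr : MatGr D C 0 (matOf ψ.toFun) :=
      matGr_of_graded 0 (fun m f hfm => by simpa using ψ.graded m f hfm)
    have := tmod_graded h0 h1 ψ.toFun mfψ 0 hGr d f hf
    simpa using this
  -- homotopy identities
  have hU₁ : C.pDiff.comp H₁ + H₁.comp C.pDiff = ψ.toFun.comp φ.toFun + LinearMap.id :=
    LinearMap.ext fun f => by simpa using hH₁ f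
  have hU₂ : D.pDiff.comp H₂ + H₂.comp D.pDiff = φ.toFun.comp ψ.toFun + LinearMap.id :=
    LinearMap.ext fun f => by simpa using hH₂ f
  have hK₁' : ∀ f, C.tDiff t (K₁ f) + K₁ (C.tDiff t f) = Ψ (Φ f) + f := by
    intro f
    rw [hK₁def, hΨdef, hΦdef, ← tmod_pDiff C t, ← tmod_pDiff C t f,
      ← tmod_comp h0 h1 H₁ C.pDiff mfH₁ (matFilt_pDiff C) f,
      ← tmod_comp h0 h1 C.pDiff H₁ (matFilt_pDiff C) mfH₁ f,
      ← tmod_add, hU₁, tmod_add,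
      tmod_comp h0 h1 φ.toFun ψ.toFun mfφ mfψ f, tmod_id]
  have hK₂' : ∀ f, D.tDiff t (K₂ f) + K₂ (D.tDiff t f) = Φ (Ψ f) + f := by
    intro f
    rw [hK₂def, hΨdef, hΦdef, ← tmod_pDiff D t, ← tmod_pDiff D t f,
      ← tmod_comp h0 h1 H₂ D.pDiff mfH₂ (matFilt_pDiff D) f,
      ← tmod_comp h0 h1 D.pDiff H₂ (matFilt_pDiff D) mfH₂ f,
      ← tmod_add, hU₂, tmod_add,
      tmod_comp h0 h1 ψ.toFun φ.toFun mfψ mfφ f, tmod_id]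
  have hsets : C.UpsSet t = D.UpsSet t :=
    Set.Subset.antisymm
      (upsSet_subset C D t Φ Ψ K₁ hΦc hΨc hΦg hK₁')
      (upsSet_subset D C t Ψ Φ K₂ hΨc hΦc hΨg hK₂')
  rw [hsets]
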